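/- All traces of the tensor B_θ vanish: for every orthonormal basis (e_i) of V and every X ∈ V one has Σ_i B(e_i, e_i) = 0 (as a vector in V), Σ_i B_θ(e_i, X, e_i) = 0, and Σ_i B_θ(X, e_i, e_i) = 0. -/

import Mathlib

open RealInnerProductSpace

lemma sum_inner_eq_trace (V : Type) [NormedAddCommGroup V] [InnerProductSpace ℝ V]
    [FiniteDimensional ℝ V] (e : Module.Basis (Fin (Module.finrank ℝ V)) ℝ V)
    (he : Orthonormal ℝ e) (T : V →ₗ[ℝ] V) :
    ∑ i, ⟪T (e i), e i⟫ = LinearMap.trace ℝ V T := by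
  rw [LinearMap.trace_eq_matrix_trace ℝ e T, Matrix.trace]
  refine Finset.sum_congr rfl fun i _ => ?_
  rw [Matrix.diag_apply, LinearMap.toMatrix_apply, real_inner_comm]
  conv_lhs => rw [← e.sum_repr (T (e i))]
  rw [he.inner_right_fintype]

lemma trace_zero (V : Type) [NormedAddCommGroup V] [InnerProductSpace ℝ V]
    [FiniteDimensional ℝ V]
    (J : V →ₗ[ℝ] V) (hJJ : ∀ x : V, J (J x) = -x)
    (T : V →ₗ[ℝ] V) (hTJ : ∀ y : V, T (J y) = -J (T y)) :
    LinearMap.trace ℝ V T = 0 := by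
  have key : LinearMap.trace ℝ V (J * (T * J)) = LinearMap.trace ℝ V ((T * J) * J) :=
    LinearMap.trace_mul_comm ℝ J (T * J)
  have hL : J * (T * J) = T := by
    ext y; simp [Module.End.mul_apply, hTJ y, hJJ (T y)]
  have hR : (T * J) * J = -T := by
    ext y; simp [Module.End.mul_apply, hJJ y]
  rw [hL, hR, map_neg] at key
  linarith

/-- All traces of the tensor B_θ vanish: for every orthonormal
basis (e_i) of V and every X ∈ V one has Σ_i B(e_i,e_i) = 0 (as a vector in V),
Σ_i B_θ(e_i, X, e_i) = 0, and Σ_i B_θ(X, e_i, e_i) = 0. -/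
theorem stmt10 (V : Type) [NormedAddCommGroup V] [InnerProductSpace ℝ V]
    [FiniteDimensional ℝ V]
    (J : V →ₗ[ℝ] V)
    (hJiso : ∀ x y : V, ⟪J x, J y⟫ = ⟪x, y⟫)
    (hJJ : ∀ x : V, J (J x) = -x)
    (N : V →ₗ[ℝ] V →ₗ[ℝ] V)
    (hNanti : ∀ X Y : V, N X Y = -N Y X)
    (hNJ1 : ∀ X Y : V, J (N X Y) = -N (J X) Y)
    (hNJ2 : ∀ X Y : V, J (N X Y) = -N X (J Y))
    (Bθ : V → V → V → ℝ)
    (hBθ : ∀ X Y Z : V,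
      Bθ X Y Z = (1 / 8) * (⟪N X Y, Z⟫ + ⟪N Z Y, X⟫ + ⟪N Z X, Y⟫))
    (B : V → V → V)
    (hB : ∀ X Y Z : V, ⟪B X Y, Z⟫ = Bθ X Y Z)
    : ∀ e : Module.Basis (Fin (Module.finrank ℝ V)) ℝ V, Orthonormal ℝ e →
      (∑ i, B (e i) (e i) = 0) ∧
      (∀ X : V, ∑ i, Bθ (e i) X (e i) = 0) ∧
      (∀ X : V, ∑ i, Bθ X (e i) (e i) = 0) := by
  intro e he
  -- key: Σ_i ⟪N Z (e i), e i⟫ = 0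
  have hNself : ∀ X : V, N X X = 0 := by
    intro X
    have h := hNanti X X
    have h2 : (2 : ℝ) • N X X = 0 := by
      rw [two_smul]; nth_rewrite 2 [h]; simp
    simpa using (smul_eq_zero.mp h2).resolve_left (by norm_num)
  have key : ∀ Z : V, ∑ i, ⟪N Z (e i), e i⟫ = 0 := by
    intro Z
    rw [sum_inner_eq_trace V e he (N Z)]
    refine trace_zero V J hJJ (N Z) fun y => ?_
    have := hNJ2 Z y
    have h := congrArg (fun v => -v) this
    simp at h
    rw [← h]
  refine ⟨?_, ?_, ?_⟩
  · have : ∀ Z : V, ⟪∑ i, B (e i) (e i), Z⟫ = 0 := by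
      intro Z
      rw [sum_inner]
      have : ∀ i, ⟪B (e i) (e i), Z⟫ = (1/4) * ⟪N Z (e i), e i⟫ := by
        intro i
        rw [hB, hBθ, hNself]
        simp only [inner_zero_left]
        have : ⟪N Z (e i), e i⟫ = ⟪N Z (e i), e i⟫ := rfl
        ring
      rw [Finset.sum_congr rfl fun i _ => this i, ← Finset.mul_sum, key Z, mul_zero]
    have h0 := this (∑ i, B (e i) (e i))
    exact inner_self_eq_zero.mp h0
  · intro X
    have : ∀ i, Bθ (e i) X (e i) = (1/4) * ⟪N (e i) X, e i⟫ := by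
      intro i
      rw [hBθ, hNself]
      simp only [inner_zero_left]
      ring
    rw [Finset.sum_congr rfl fun i _ => this i, ← Finset.mul_sum]
    have : ∑ i, ⟪N (e i) X, e i⟫ = -∑ i, ⟪N X (e i), e i⟫ := by
      rw [← Finset.sum_neg_distrib]
      exact Finset.sum_congr rfl fun i _ => by rw [hNanti, inner_neg_left]
    rw [this, key X]; ring
  · intro X
    have : ∀ i, Bθ X (e i) (e i) = 0 := by
      intro i
      rw [hBθ, hNself]
      have h := hNanti X (e i)
      rw [h, inner_neg_left]
      simp only [inner_zero_left]
      ring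
    rw [Finset.sum_congr rfl fun i _ => this i, Finset.sum_const_zero]
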